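/- arXiv:1909.01250 — 4 statements merged into one kernel-verified Lean document; each statement's English description precedes it below -/
import Mathlib

section
/- Let d ≥ 1 and let g : ℝ^d × ℝ^d → ℝ be continuous, ℤ^d-periodic in its second argument, and such that there is a compact set K ⊂ ℝ^d with g(x,y) = 0 whenever x ∉ K. Then lim_{ε→0⁺} ∫_{ℝ^d} g(x, x/ε) dx = ∫_{ℝ^d} ∫_{[0,1]^d} g(x,y) dy dx. -/
open MeasureTheory Filter Set Pointwise

noncomputable def obasis (d : ℕ) : Module.Basis (Fin d) ℝ (EuclideanSpace ℝ (Fin d)) :=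
  (EuclideanSpace.basisFun (Fin d) ℝ).toBasis

def boxIco (d : ℕ) : Set (EuclideanSpace ℝ (Fin d)) :=
  (WithLp.ofLp : EuclideanSpace ℝ (Fin d) → (Fin d → ℝ)) ⁻¹' Set.univ.pi fun _ : Fin d => Set.Ico (0:ℝ) 1

def boxIcc (d : ℕ) : Set (EuclideanSpace ℝ (Fin d)) :=
  (WithLp.ofLp : EuclideanSpace ℝ (Fin d) → (Fin d → ℝ)) ⁻¹' Set.univ.pi fun _ : Fin d => Set.Icc (0:ℝ) 1

variable {d : ℕ}

lemma fd_eq : ZSpan.fundamentalDomain (obasis d) = boxIco d := by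
  ext x
  rw [ZSpan.mem_fundamentalDomain]
  constructor
  · intro h i _
    simpa [obasis] using h i
  · intro h i
    simpa [obasis] using h i (Set.mem_univ i)

lemma fd_isfd : IsAddFundamentalDomain
    (Submodule.span ℤ (Set.range (obasis d))).toAddSubgroup
    (boxIco d) (volume : Measure (EuclideanSpace ℝ (Fin d))) := by
  rw [← fd_eq]
  exact ZSpan.isAddFundamentalDomain' (obasis d) volume

lemma fd_isfd_vadd (c : EuclideanSpace ℝ (Fin d)) : IsAddFundamentalDomain
    (Submodule.span ℤ (Set.range (obasis d))).toAddSubgroup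
    (c +ᵥ boxIco d) (volume : Measure (EuclideanSpace ℝ (Fin d))) :=
  fd_isfd.vadd_of_comm c





lemma hyperplane_null (i : Fin d) (a : ℝ) :
    volume {x : EuclideanSpace ℝ (Fin d) | x i = a} = 0 := by
  have e := EuclideanSpace.volume_preserving_symm_measurableEquiv_toLp (Fin d)
  have : {x : EuclideanSpace ℝ (Fin d) | x i = a}
      = ((MeasurableEquiv.toLp 2 (Fin d → ℝ)).symm) ⁻¹' {f : Fin d → ℝ | f i = a} := rfl
  rw [this, e.measure_preimage_emb ((MeasurableEquiv.toLp 2 (Fin d → ℝ)).symm).measurableEmbedding]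
  rw [volume_pi]
  exact Measure.pi_hyperplane (fun _ => (volume : Measure ℝ)) i a

lemma box_ae : (boxIcc d : Set (EuclideanSpace ℝ (Fin d))) =ᵐ[volume] boxIco d := by
  rw [MeasureTheory.ae_eq_set]
  constructor
  · refine measure_mono_null ?_ (measure_iUnion_null (fun i : Fin d => hyperplane_null i 1))
    rintro x ⟨hIcc, hIco⟩
    rw [boxIcc, Set.mem_preimage, Set.mem_univ_pi] at hIcc
    rw [boxIco, Set.mem_preimage, Set.mem_univ_pi] at hIco
    push_neg at hIco
    obtain ⟨i, hi⟩ := hIco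
    have h1 := hIcc i
    rw [Set.mem_Icc] at h1
    rw [Set.mem_Ico] at hi
    push_neg at hi
    exact Set.mem_iUnion.2 ⟨i, le_antisymm h1.2 (hi h1.1)⟩
  · have : boxIco d \ boxIcc d = ∅ := by
      rw [Set.diff_eq_empty]
      intro x hx
      rw [boxIco, Set.mem_preimage, Set.mem_univ_pi] at hx
      rw [boxIcc, Set.mem_preimage, Set.mem_univ_pi]
      intro i
      have := hx i
      rw [Set.mem_Ico] at this
      exact Set.mem_Icc.2 ⟨this.1, le_of_lt this.2⟩
    simp [this]

lemma periodic_translate (f : EuclideanSpace ℝ (Fin d) → ℝ)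
    (hper : ∀ (y : EuclideanSpace ℝ (Fin d)) (k : Fin d → ℤ),
      f (y + (WithLp.equiv 2 (Fin d → ℝ)).symm (fun i => (k i : ℝ))) = f y)
    (c : EuclideanSpace ℝ (Fin d)) :
    ∫ t in boxIcc d, f (c + t) = ∫ y in boxIcc d, f y := by
  rw [Measure.restrict_congr_set box_ae]
  have h2 : ∫ y in (c +ᵥ boxIco d), f y = ∫ t in boxIco d, f (c + t) := by
    rw [← Set.image_vadd]
    exact (measurePreserving_add_left volume c).setIntegral_image_emb
      (measurableEmbedding_addLeft c) f _
  rw [← h2]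
  haveI : Countable (Submodule.span ℤ (Set.range (obasis d))).toAddSubgroup :=
    inferInstanceAs (Countable (Submodule.span ℤ (Set.range ⇑(obasis d))))
  refine (fd_isfd_vadd c).setIntegral_eq fd_isfd ?_
  rintro ⟨γ, hγ⟩ x
  have hmem : ∀ i, ∃ z : ℤ, (z : ℝ) = (obasis d).repr γ i := by
    intro i
    obtain ⟨z, hz⟩ := (Module.Basis.mem_span_iff_repr_mem ℤ (obasis d) γ).1 hγ i
    exact ⟨z, by simpa using hz⟩
  choose k hk using hmem
  have hγi : ∀ i, γ i = (k i : ℝ) := by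
    intro i
    have := hk i
    simp [obasis] at this
    exact this.symm
  have hγeq : γ = (WithLp.equiv 2 (Fin d → ℝ)).symm (fun i => (k i : ℝ)) := by
    ext i
    exact hγi i
  show f (γ + x) = f x
  rw [add_comm, hγeq]
  exact hper x k

variable {d : ℕ}

lemma boxIcc_compact : IsCompact (boxIcc d) := by
  have h : boxIcc d = (EuclideanSpace.equiv (Fin d) ℝ).toHomeomorph ⁻¹'
      (Set.univ.pi fun _ : Fin d => Set.Icc (0:ℝ) 1) := rfl
  rw [h, Homeomorph.isCompact_preimage]
  exact isCompact_univ_pi fun _ => isCompact_Icc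

lemma boxIcc_volume : volume (boxIcc d) = 1 := by
  have h : boxIcc d = ((MeasurableEquiv.toLp 2 (Fin d → ℝ)).symm) ⁻¹'
      (Set.univ.pi fun _ : Fin d => Set.Icc (0:ℝ) 1) := rfl
  rw [h, (EuclideanSpace.volume_preserving_symm_measurableEquiv_toLp (Fin d)).measure_preimage_emb
    (MeasurableEquiv.measurableEmbedding _), volume_pi_pi]
  simp [Real.volume_Icc]

lemma norm_le_of_mem_boxIcc (hd : 1 ≤ d) {t : EuclideanSpace ℝ (Fin d)}
    (ht : t ∈ boxIcc d) : ‖t‖ ≤ (d : ℝ) := by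
  rw [boxIcc, Set.mem_preimage, Set.mem_univ_pi] at ht
  have h1 : ‖t‖ = Real.sqrt (∑ i, ‖t i‖ ^ 2) := by
    rw [EuclideanSpace.norm_eq]
  rw [h1]
  have h2 : (∑ i, ‖t i‖ ^ 2) ≤ (d : ℝ) := by
    calc ∑ i, ‖t i‖ ^ 2 ≤ ∑ _i : Fin d, (1:ℝ) := by
          apply Finset.sum_le_sum
          intro i _
          have := ht i
          rw [Set.mem_Icc] at this
          have : ‖t i‖ ≤ 1 := by
            rw [Real.norm_eq_abs, abs_le]; constructor <;> linarith [this.1, this.2]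
          nlinarith [norm_nonneg (t i)]
      _ = (d : ℝ) := by simp
  calc Real.sqrt (∑ i, ‖t i‖ ^ 2) ≤ Real.sqrt ((d:ℝ)^2) := by
        apply Real.sqrt_le_sqrt
        have hd1 : (1:ℝ) ≤ (d:ℝ) := by exact_mod_cast hd
        nlinarith
    _ = (d : ℝ) := Real.sqrt_sq (by positivity)

noncomputable def fold {d : ℕ} (y : EuclideanSpace ℝ (Fin d)) : EuclideanSpace ℝ (Fin d) :=
  (WithLp.equiv 2 (Fin d → ℝ)).symm fun i => Int.fract (y i)

variable {d : ℕ}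

lemma fold_mem_boxIcc (y : EuclideanSpace ℝ (Fin d)) : fold y ∈ boxIcc d := by
  rw [boxIcc, Set.mem_preimage, Set.mem_univ_pi]
  intro i
  rw [Set.mem_Icc]
  exact ⟨Int.fract_nonneg _, le_of_lt (Int.fract_lt_one _)⟩

lemma fold_eq (g : EuclideanSpace ℝ (Fin d) → EuclideanSpace ℝ (Fin d) → ℝ)
    (hg_per : ∀ (x y : EuclideanSpace ℝ (Fin d)) (k : Fin d → ℤ),
      g x (y + (WithLp.equiv 2 (Fin d → ℝ)).symm (fun i => (k i : ℝ))) = g x y)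
    (x y : EuclideanSpace ℝ (Fin d)) : g x (fold y) = g x y := by
  have h := hg_per x (fold y) (fun i => ⌊y i⌋)
  have h2 : fold y + (WithLp.equiv 2 (Fin d → ℝ)).symm (fun i => ((⌊y i⌋ : ℤ) : ℝ)) = y := by
    ext i
    show Int.fract (y i) + (⌊y i⌋ : ℝ) = y i
    exact Int.fract_add_floor (y i)
  rw [h2] at h
  exact h.symm

lemma boxIcc_compact' : IsCompact (boxIcc d) := by
  have h : boxIcc d = (EuclideanSpace.equiv (Fin d) ℝ).toHomeomorph ⁻¹'
      (Set.univ.pi fun _ : Fin d => Set.Icc (0:ℝ) 1) := rfl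
  rw [h, Homeomorph.isCompact_preimage]
  exact isCompact_univ_pi fun _ => isCompact_Icc

lemma key_uc (g : EuclideanSpace ℝ (Fin d) → EuclideanSpace ℝ (Fin d) → ℝ)
    (hg_cont : Continuous fun p : EuclideanSpace ℝ (Fin d) × EuclideanSpace ℝ (Fin d) =>
      g p.1 p.2)
    (hg_per : ∀ (x y : EuclideanSpace ℝ (Fin d)) (k : Fin d → ℤ),
      g x (y + (WithLp.equiv 2 (Fin d → ℝ)).symm (fun i => (k i : ℝ))) = g x y)
    (K : Set (EuclideanSpace ℝ (Fin d))) (hK : IsCompact K)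
    (hg_supp : ∀ x ∉ K, ∀ y, g x y = 0) :
    ∀ δ > (0:ℝ), ∃ η, 0 < η ∧ η ≤ 1 ∧ ∀ x w y, ‖w‖ ≤ η → |g (x + w) y - g x y| ≤ δ := by
  intro δ hδ
  set K2 := Metric.cthickening 2 K with hK2def
  have hK2 : IsCompact K2 := hK.cthickening
  have hS : IsCompact (K2 ×ˢ boxIcc d) := hK2.prod boxIcc_compact'
  have huc : UniformContinuousOn (fun p : _ × _ => g p.1 p.2) (K2 ×ˢ boxIcc d) :=
    hS.uniformContinuousOn_of_continuous hg_cont.continuousOn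
  rw [Metric.uniformContinuousOn_iff_le] at huc
  obtain ⟨η0, hη0, hη⟩ := huc δ hδ
  refine ⟨min (η0/2) 1, by positivity, min_le_right _ _, ?_⟩
  intro x w y hw
  have hw1 : ‖w‖ ≤ 1 := hw.trans (min_le_right _ _)
  have hwη : ‖w‖ ≤ η0 := hw.trans ((min_le_left _ _).trans (by linarith))
  by_cases hx : x ∈ Metric.cthickening 1 K
  · have hxK2 : x ∈ K2 := Metric.cthickening_mono (by norm_num) K hx
    have hxwK2 : x + w ∈ K2 := by
      have h1 : x + w ∈ Metric.cthickening 1 (Metric.cthickening 1 K) := by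
        apply Metric.mem_cthickening_of_dist_le (x + w) x 1 _ hx
        simpa [dist_eq_norm] using hw1
      have h2 := Metric.cthickening_cthickening_subset zero_le_one zero_le_one K
      have h3 : (1:ℝ) + 1 = 2 := by norm_num
      rw [h3] at h2
      exact h2 h1
    have hmem1 : ((x + w, fold y) : _ × _) ∈ K2 ×ˢ boxIcc d :=
      ⟨hxwK2, fold_mem_boxIcc y⟩
    have hmem2 : ((x, fold y) : _ × _) ∈ K2 ×ˢ boxIcc d := ⟨hxK2, fold_mem_boxIcc y⟩
    have hd : dist ((x + w, fold y) : _ × _) (x, fold y) ≤ η0 := by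
      rw [Prod.dist_eq]
      simp only [dist_self]
      rw [dist_eq_norm]
      simpa using hwη
    have := hη _ hmem1 _ hmem2 hd
    rw [Real.dist_eq] at this
    calc |g (x + w) y - g x y| = |g (x + w) (fold y) - g x (fold y)| := by
          rw [fold_eq g hg_per, fold_eq g hg_per]
      _ ≤ δ := this
  · have h1 : g x y = 0 := by
      refine hg_supp x (fun hxK => hx ?_) y
      exact Metric.self_subset_cthickening K hxK
    have h2 : g (x + w) y = 0 := by
      refine hg_supp _ (fun hxK => hx ?_) y
      apply Metric.mem_cthickening_of_dist_le x (x + w) 1 _ hxK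
      simpa [dist_eq_norm] using hw1
    rw [h1, h2]
    simp [le_of_lt hδ]

variable {d : ℕ}

lemma intg_main (g : EuclideanSpace ℝ (Fin d) → EuclideanSpace ℝ (Fin d) → ℝ)
    (hg_cont : Continuous fun p : EuclideanSpace ℝ (Fin d) × EuclideanSpace ℝ (Fin d) =>
      g p.1 p.2)
    (K : Set (EuclideanSpace ℝ (Fin d))) (hK : IsCompact K)
    (hg_supp : ∀ x ∉ K, ∀ y, g x y = 0)
    (F : EuclideanSpace ℝ (Fin d) → EuclideanSpace ℝ (Fin d)) (hF : Continuous F) :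
    Integrable (fun x => g x (F x)) := by
  apply Continuous.integrable_of_hasCompactSupport
  · exact hg_cont.comp (continuous_id.prodMk hF)
  · exact HasCompactSupport.intro hK (fun x hx => hg_supp x hx (F x))

lemma intg_shift (g : EuclideanSpace ℝ (Fin d) → EuclideanSpace ℝ (Fin d) → ℝ)
    (hg_cont : Continuous fun p : EuclideanSpace ℝ (Fin d) × EuclideanSpace ℝ (Fin d) =>
      g p.1 p.2)
    (K : Set (EuclideanSpace ℝ (Fin d))) (hK : IsCompact K)
    (hg_supp : ∀ x ∉ K, ∀ y, g x y = 0)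
    (a : EuclideanSpace ℝ (Fin d))
    (F : EuclideanSpace ℝ (Fin d) → EuclideanSpace ℝ (Fin d)) (hF : Continuous F) :
    Integrable (fun x => g (x + a) (F x)) := by
  apply Continuous.integrable_of_hasCompactSupport
  · exact hg_cont.comp ((continuous_id.add continuous_const).prodMk hF)
  · apply HasCompactSupport.intro (hK.image (continuous_id.sub (continuous_const (y := a))))
    intro x hx
    apply hg_supp _ _ (F x)
    intro hmem
    exact hx ⟨x + a, hmem, by simp⟩
section
variable {d : ℕ}

lemma stepB (g : EuclideanSpace ℝ (Fin d) → EuclideanSpace ℝ (Fin d) → ℝ)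
    (hg_cont : Continuous fun p : EuclideanSpace ℝ (Fin d) × EuclideanSpace ℝ (Fin d) =>
      g p.1 p.2)
    (hg_per : ∀ (x y : EuclideanSpace ℝ (Fin d)) (k : Fin d → ℤ),
      g x (y + (WithLp.equiv 2 (Fin d → ℝ)).symm (fun i => (k i : ℝ))) = g x y)
    (K : Set (EuclideanSpace ℝ (Fin d))) (hK : IsCompact K)
    (hg_supp : ∀ x ∉ K, ∀ y, g x y = 0)
    (C : ℝ) (hC0 : 0 ≤ C) (hCb : ∀ x y, |g x y| ≤ C)
    (c : ℝ) :
    Integrable (Function.uncurry fun t x : EuclideanSpace ℝ (Fin d) => g x (c • x + t))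
      ((volume.restrict (boxIcc d)).prod volume) := by
  rw [Function.uncurry_def]
  have hcont : Continuous (fun p : EuclideanSpace ℝ (Fin d) × EuclideanSpace ℝ (Fin d) =>
      g p.2 (c • p.2 + p.1)) := by
    exact hg_cont.comp
      (continuous_snd.prodMk ((continuous_snd.const_smul c).add continuous_fst))
  refine Integrable.mono' (g := fun p : _ × _ =>
      (Set.univ ×ˢ K).indicator (fun _ => C) p) ?_ hcont.aestronglyMeasurable ?_
  · rw [integrable_indicator_iff (MeasurableSet.univ.prod hK.measurableSet)]
    refine integrableOn_const (lt_top_iff_ne_top.1 ?_)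
    rw [Measure.prod_prod, Measure.restrict_apply_univ, boxIcc_volume, one_mul]
    exact hK.measure_lt_top
  · filter_upwards with p
    by_cases hp : p.2 ∈ K
    · rw [Set.indicator_of_mem (Set.mk_mem_prod (Set.mem_univ _) hp)]
      rw [Real.norm_eq_abs]
      exact hCb _ _
    · rw [Set.indicator_of_notMem (by simp [hp])]
      rw [Real.norm_eq_abs, hg_supp p.2 hp]
      simp [hC0]
end
section
variable {d : ℕ}
lemma inner_eq (g : EuclideanSpace ℝ (Fin d) → EuclideanSpace ℝ (Fin d) → ℝ)
    (x : EuclideanSpace ℝ (Fin d)) :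
    (∫ y : Fin d → ℝ in Set.univ.pi (fun _ : Fin d => Set.Icc (0:ℝ) 1), g x (WithLp.toLp 2 y))
      = ∫ y in boxIcc d, g x y := by
  have h := ((EuclideanSpace.volume_preserving_symm_measurableEquiv_toLp (Fin d)).symm).setIntegral_image_emb
    (MeasurableEquiv.measurableEmbedding _) (fun y => g x y)
    (Set.univ.pi fun _ : Fin d => Set.Icc (0:ℝ) 1)
  have himg : (MeasurableEquiv.toLp 2 (Fin d → ℝ)).symm.symm ''
      (Set.univ.pi fun _ : Fin d => Set.Icc (0:ℝ) 1) = boxIcc d := by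
    ext z
    constructor
    · rintro ⟨w, hw, rfl⟩
      exact hw
    · intro hz
      exact ⟨z, hz, rfl⟩
  rw [himg] at h
  exact h.symm
end

/-- two-variable periodic averaging lemma. -/
theorem stmt2 (d : ℕ) (hd : 1 ≤ d)
    (g : EuclideanSpace ℝ (Fin d) → EuclideanSpace ℝ (Fin d) → ℝ)
    (hg_cont : Continuous fun p : EuclideanSpace ℝ (Fin d) × EuclideanSpace ℝ (Fin d) =>
      g p.1 p.2)
    (hg_per : ∀ (x y : EuclideanSpace ℝ (Fin d)) (k : Fin d → ℤ),
      g x (y + (WithLp.equiv 2 (Fin d → ℝ)).symm (fun i => (k i : ℝ))) = g x y)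
    (K : Set (EuclideanSpace ℝ (Fin d))) (hK : IsCompact K)
    (hg_supp : ∀ x ∉ K, ∀ y, g x y = 0) :
    Tendsto (fun ε : ℝ => ∫ x, g x (ε⁻¹ • x))
      (nhdsWithin 0 (Set.Ioi 0))
      (nhds (∫ x, ∫ y in Set.univ.pi fun _ : Fin d => Set.Icc (0 : ℝ) 1, g x (WithLp.toLp 2 y))) := by
  have htarget : (∫ x, ∫ y in Set.univ.pi fun _ : Fin d => Set.Icc (0 : ℝ) 1, g x (WithLp.toLp 2 y))
      = ∫ x, ∫ y in boxIcc d, g x y := by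
    congr 1
    funext x
    exact inner_eq g x
  rw [htarget]
  obtain ⟨C, hC0, hCb⟩ : ∃ C, 0 ≤ C ∧ ∀ x y, |g x y| ≤ C := by
    obtain ⟨C, hC⟩ := (hK.prod (boxIcc_compact (d := d))).exists_bound_of_continuousOn
      hg_cont.continuousOn
    refine ⟨max C 0, le_max_right _ _, fun x y => ?_⟩
    by_cases hx : x ∈ K
    · rw [← fold_eq g hg_per x y]
      have h := hC (x, fold y) (Set.mk_mem_prod hx (fold_mem_boxIcc y))
      rw [Real.norm_eq_abs] at h
      exact h.trans (le_max_left _ _)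
    · rw [hg_supp x hx y]
      simpa using le_max_right C 0
  set K1 := Metric.cthickening 1 K with hK1def
  have hK1c : IsCompact K1 := hK.cthickening
  have hK1meas : MeasurableSet K1 := hK1c.measurableSet
  set V := (volume K1).toReal with hVdef
  have hV0 : 0 ≤ V := ENNReal.toReal_nonneg
  rw [Metric.tendsto_nhdsWithin_nhds]
  intro δ hδ
  set δ' := δ / (2 * (V + 1)) with hδ'def
  have hδ'0 : 0 < δ' := by positivity
  obtain ⟨η, hη0, hη1, hηb⟩ := key_uc g hg_cont hg_per K hK hg_supp δ' hδ'0
  refine ⟨η / (d + 1), by positivity, ?_⟩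
  intro ε hε hdist
  rw [Real.dist_eq, sub_zero] at hdist
  rw [Set.mem_Ioi] at hε
  rw [abs_of_pos hε] at hdist
  set B : EuclideanSpace ℝ (Fin d) → ℝ := fun t => ∫ x, g x (ε⁻¹ • x + t) with hBdef
  set Iε : ℝ := ∫ x, g x (ε⁻¹ • x) with hIεdef
  set I : ℝ := ∫ x, ∫ y in boxIcc d, g x y with hIdef
  have hA := stepB g hg_cont hg_per K hK hg_supp C hC0 hCb ε⁻¹
  have hBint : Integrable B (volume.restrict (boxIcc d)) := hA.integral_prod_left
  have hstepB : ∫ t in boxIcc d, B t = I := by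
    calc ∫ t in boxIcc d, ∫ x, g x (ε⁻¹ • x + t)
        = ∫ x, ∫ t in boxIcc d, g x (ε⁻¹ • x + t) := integral_integral_swap hA
      _ = ∫ x, ∫ y in boxIcc d, g x y := by
          congr 1
          funext x
          exact periodic_translate (g x) (fun y k => hg_per x y k) (ε⁻¹ • x)
  have hstepC : ∀ t : EuclideanSpace ℝ (Fin d),
      (∫ x, g (x + ε • t) (ε⁻¹ • x + t)) = Iε := by
    intro t
    have heq : (fun x => g (x + ε • t) (ε⁻¹ • x + t))
        = fun x => (fun z => g z (ε⁻¹ • z)) (x + ε • t) := by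
      funext x
      simp only
      congr 2
      rw [smul_add, smul_smul, inv_mul_cancel₀ (ne_of_gt hε), one_smul]
    rw [heq]
    exact integral_add_right_eq_self (fun z => g z (ε⁻¹ • z)) (ε • t)
  have hstepD : ∀ t ∈ boxIcc d, ‖Iε - B t‖ ≤ δ' * V := by
    intro t ht
    have hwnorm : ‖ε • t‖ ≤ η := by
      rw [norm_smul, Real.norm_eq_abs, abs_of_pos hε]
      have h1 : ‖t‖ ≤ (d : ℝ) := norm_le_of_mem_boxIcc hd ht
      have h2 : ε * ‖t‖ ≤ ε * ((d : ℝ) + 1) := by nlinarith [norm_nonneg t]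
      have h3 : ε * ((d : ℝ) + 1) < η / ((d : ℝ) + 1) * ((d : ℝ) + 1) := by
        apply mul_lt_mul_of_pos_right hdist
        positivity
      have h4 : η / ((d : ℝ) + 1) * ((d : ℝ) + 1) = η := by field_simp
      linarith
    have hw1 : ‖ε • t‖ ≤ 1 := hwnorm.trans hη1
    have hint1 : Integrable (fun x => g (x + ε • t) (ε⁻¹ • x + t)) :=
      intg_shift g hg_cont K hK hg_supp (ε • t) (fun x => ε⁻¹ • x + t)
        ((continuous_const_smul _).add continuous_const)
    have hint2 : Integrable (fun x => g x (ε⁻¹ • x + t)) :=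
      intg_main g hg_cont K hK hg_supp (fun x => ε⁻¹ • x + t)
        ((continuous_const_smul _).add continuous_const)
    have hdiff : Iε - B t = ∫ x, (g (x + ε • t) (ε⁻¹ • x + t) - g x (ε⁻¹ • x + t)) := by
      rw [integral_sub hint1 hint2, hstepC t]
    rw [hdiff]
    have hmono : (∫ x, ‖g (x + ε • t) (ε⁻¹ • x + t) - g x (ε⁻¹ • x + t)‖)
        ≤ ∫ x, K1.indicator (fun _ => δ') x := by
      apply integral_mono_of_nonneg (Eventually.of_forall fun x => norm_nonneg _)
      · rw [← integrableOn_univ]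
        rw [integrableOn_univ]
        rw [integrable_indicator_iff hK1meas]
        exact integrableOn_const hK1c.measure_lt_top.ne
      · apply Eventually.of_forall
        intro x
        by_cases hx : x ∈ K1
        · simp only [Set.indicator_of_mem hx, Real.norm_eq_abs]
          exact hηb _ _ _ hwnorm
        · have h1 : g (x + ε • t) (ε⁻¹ • x + t) = 0 := by
            refine hg_supp _ (fun hmem => hx ?_) _
            apply Metric.mem_cthickening_of_dist_le x (x + ε • t) 1 _ hmem
            simpa [dist_eq_norm] using hw1
          have h2 : g x (ε⁻¹ • x + t) = 0 :=
            hg_supp _ (fun hmem => hx (Metric.self_subset_cthickening K hmem)) _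
          simp only [Set.indicator_of_notMem hx, h1, h2]
          simp
    calc ‖∫ x, (g (x + ε • t) (ε⁻¹ • x + t) - g x (ε⁻¹ • x + t))‖
        ≤ ∫ x, ‖g (x + ε • t) (ε⁻¹ • x + t) - g x (ε⁻¹ • x + t)‖ :=
          norm_integral_le_integral_norm _
      _ ≤ ∫ x, K1.indicator (fun _ => δ') x := hmono
      _ = δ' * V := by
          rw [integral_indicator_const _ hK1meas, measureReal_def, smul_eq_mul, mul_comm]
  have hconst : IntegrableOn (fun _ : EuclideanSpace ℝ (Fin d) => Iε) (boxIcc d) volume := by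
    refine integrableOn_const (lt_top_iff_ne_top.1 ?_)
    rw [boxIcc_volume]
    exact ENNReal.one_lt_top
  have hstepE : Iε - I = ∫ t in boxIcc d, (Iε - B t) := by
    rw [integral_sub hconst hBint, hstepB, setIntegral_const, measureReal_def, boxIcc_volume]
    simp
  have hfinal : ‖Iε - I‖ ≤ δ' * V := by
    rw [hstepE]
    have h := norm_setIntegral_le_of_norm_le_const (μ := volume) (s := boxIcc d)
      (f := fun t => Iε - B t) (C := δ' * V)
      (by rw [boxIcc_volume]; exact ENNReal.one_lt_top) hstepD
    rw [measureReal_def, boxIcc_volume] at h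
    simpa using h
  show dist (∫ x, g x (ε⁻¹ • x)) I < δ
  rw [Real.dist_eq]
  rw [← Real.norm_eq_abs]
  calc ‖Iε - I‖ ≤ δ' * V := hfinal
    _ ≤ δ' * (V + 1) := by nlinarith
    _ = δ / 2 := by
        rw [hδ'def]
        field_simp
    _ < δ := by linarith
end

section
/- Let d ≥ 1 and let F : ℝ^d × ℝ → ℝ be continuous. Assume that for all continuous compactly supported f₁, f₂ : ℝ^d → ℝ one has ∫_{ℝ^d} (F(x, f₁(x)) − F(x, f₂(x)))(f₁(x) − f₂(x)) dx ≥ 0. Then the same inequality ∫_{ℝ^d} (F(x, f₁(x)) − F(x, f₂(x)))(f₁(x) − f₂(x)) dx ≥ 0 holds for all bounded Lebesgue-measurable compactly supported f₁, f₂ : ℝ^d → ℝ. -/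
open MeasureTheory Metric Set Filter Topology ENNReal NNReal

section aux
lemma clamp_le (C a b : ℝ) (ha : |a| ≤ C) :
    |a - max (-C) (min C b)| ≤ |a - b| := by
  rcases abs_le.1 ha with ⟨h1, h2⟩
  rcases le_total C b with hb | hb
  · have h : max (-C) (min C b) = C := by
      rw [min_eq_left hb, max_eq_right (by linarith)]
    rw [h, abs_of_nonpos (by linarith), abs_of_nonpos (by linarith)]; linarith
  · rcases le_total b (-C) with hb' | hb'
    · have h : max (-C) (min C b) = -C := by
        rw [min_eq_right (by linarith), max_eq_left hb']
      rw [h, abs_of_nonneg (by linarith), abs_of_nonneg (by linarith)]; linarith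
    · rw [min_eq_right hb, max_eq_right hb']

lemma key_pt (C a b c : ℝ) (ha : |a| ≤ C) (hc0 : 0 ≤ c) (hc1 : c ≤ 1)
    (hcase : c = 1 ∨ a = 0) : |a - c * max (-C) (min C b)| ≤ |a - b| := by
  rcases hcase with h | h
  · rw [h, one_mul]; exact clamp_le C a b ha
  · subst h
    have h0 : (0:ℝ) ≤ C := (abs_nonneg _).trans ha
    have h1 : |max (-C) (min C b)| ≤ |b| := by
      simpa using clamp_le C 0 b (by simpa using h0)
    calc |0 - c * max (-C) (min C b)| = c * |max (-C) (min C b)| := by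
          rw [zero_sub, abs_neg, abs_mul, abs_of_nonneg hc0]
      _ ≤ |b| := by nlinarith [abs_nonneg (max (-C) (min C b))]
      _ = |0 - b| := by rw [zero_sub, abs_neg]

lemma approx_seq {d : ℕ} (f : EuclideanSpace ℝ (Fin d) → ℝ) (hf : Measurable f)
    (C : ℝ) (hC : ∀ x, |f x| ≤ C) (hcs : HasCompactSupport f)
    (χ : EuclideanSpace ℝ (Fin d) → ℝ) (hχc : Continuous χ) (hχcs : HasCompactSupport χ)
    (hχ0 : ∀ x, 0 ≤ χ x) (hχ1 : ∀ x, χ x ≤ 1) (hχeq : ∀ x ∈ tsupport f, χ x = 1) :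
    ∃ g : ℕ → EuclideanSpace ℝ (Fin d) → ℝ,
      (∀ n, Continuous (g n)) ∧ (∀ n, HasCompactSupport (g n)) ∧
      (∀ n x, |g n x| ≤ C) ∧ (∀ n x, x ∉ tsupport χ → g n x = 0) ∧
      TendstoInMeasure volume g atTop f := by
  have h0C : (0:ℝ) ≤ C := (abs_nonneg _).trans (hC 0)
  have hmem : MemLp f 1 (volume : Measure (EuclideanSpace ℝ (Fin d))) :=
    hcs.memLp_of_bound hf.aestronglyMeasurable C
      (Eventually.of_forall fun x => by simpa using hC x)
  have hexist : ∀ n : ℕ, ∃ g : EuclideanSpace ℝ (Fin d) → ℝ,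
      Continuous g ∧ eLpNorm (f - g) 1 volume ≤ ((n : ℝ≥0∞) + 1)⁻¹ := by
    intro n
    obtain ⟨g, _, hg2, hg3, _⟩ := hmem.exists_hasCompactSupport_eLpNorm_sub_le
      (one_ne_top) (ε := ((n : ℝ≥0∞) + 1)⁻¹)
      (by simp [ENNReal.inv_ne_zero])
    exact ⟨g, hg3, hg2⟩
  choose g₀ hg₀c hg₀ using hexist
  set g : ℕ → EuclideanSpace ℝ (Fin d) → ℝ :=
    fun n x => χ x * max (-C) (min C (g₀ n x)) with hg_def
  have hptwise : ∀ n x, |f x - g n x| ≤ |f x - g₀ n x| := by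
    intro n x
    refine key_pt C (f x) (g₀ n x) (χ x) (hC x) (hχ0 x) (hχ1 x) ?_
    by_cases hx : x ∈ tsupport f
    · exact Or.inl (hχeq x hx)
    · exact Or.inr (image_eq_zero_of_notMem_tsupport hx)
  have hgc : ∀ n, Continuous (g n) := fun n =>
    hχc.mul (continuous_const.max (continuous_const.min (hg₀c n)))
  have hgb : ∀ n x, |g n x| ≤ C := by
    intro n x
    have h1 : |max (-C) (min C (g₀ n x))| ≤ C := by
      rw [abs_le]
      constructor
      · exact le_max_left _ _
      · exact max_le (by linarith) (min_le_left _ _)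
    calc |g n x| = χ x * |max (-C) (min C (g₀ n x))| := by
          rw [hg_def]; rw [abs_mul, abs_of_nonneg (hχ0 x)]
      _ ≤ 1 * C := by
          have := hχ0 x; have := hχ1 x
          have := abs_nonneg (max (-C) (min C (g₀ n x)))
          nlinarith
      _ = C := one_mul C
  have hgz : ∀ n x, x ∉ tsupport χ → g n x = 0 := by
    intro n x hx
    have : χ x = 0 := image_eq_zero_of_notMem_tsupport hx
    simp [hg_def, this]
  have hgcs : ∀ n, HasCompactSupport (g n) := by
    intro n
    refine HasCompactSupport.intro hχcs (hgz n)
  have hnorm : ∀ n, eLpNorm (f - g n) 1 volume ≤ ((n : ℝ≥0∞) + 1)⁻¹ := by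
    intro n
    refine le_trans (eLpNorm_mono fun x => ?_) (hg₀ n)
    simpa [Real.norm_eq_abs] using hptwise n x
  have htend : Tendsto (fun n => eLpNorm (f - g n) 1 volume) atTop (𝓝 0) := by
    refine tendsto_of_tendsto_of_tendsto_of_le_of_le tendsto_const_nhds
      (ENNReal.tendsto_inv_nat_nhds_zero.comp (tendsto_add_atTop_nat 1))
      (fun n => zero_le) (fun n => le_trans (hnorm n) ?_)
    simp
  refine ⟨g, hgc, hgcs, hgb, hgz, ?_⟩
  exact tendstoInMeasure_of_tendsto_eLpNorm one_ne_zero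
    (fun n => (hgc n).aestronglyMeasurable) hf.aestronglyMeasurable
    (by simpa [eLpNorm_sub_comm] using htend)
end aux

/-- monotonicity of a local coupling extends from continuous compactly
supported functions to bounded measurable compactly supported ones. -/
theorem stmt8 (d : ℕ) (hd : 1 ≤ d)
    (F : EuclideanSpace ℝ (Fin d) → ℝ → ℝ)
    (hF_cont : Continuous fun p : EuclideanSpace ℝ (Fin d) × ℝ => F p.1 p.2)
    (hmono : ∀ f₁ f₂ : EuclideanSpace ℝ (Fin d) → ℝ,
      Continuous f₁ → Continuous f₂ → HasCompactSupport f₁ → HasCompactSupport f₂ →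
      0 ≤ ∫ x, (F x (f₁ x) - F x (f₂ x)) * (f₁ x - f₂ x)) :
    ∀ f₁ f₂ : EuclideanSpace ℝ (Fin d) → ℝ,
      Measurable f₁ → Measurable f₂ →
      (∃ C : ℝ, ∀ x, |f₁ x| ≤ C) → (∃ C : ℝ, ∀ x, |f₂ x| ≤ C) →
      HasCompactSupport f₁ → HasCompactSupport f₂ →
      0 ≤ ∫ x, (F x (f₁ x) - F x (f₂ x)) * (f₁ x - f₂ x) := by
  rintro f₁ f₂ hm₁ hm₂ ⟨C₁, hC₁⟩ ⟨C₂, hC₂⟩ hcs₁ hcs₂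
  set C := max C₁ C₂ with hC_def
  have hC₁' : ∀ x, |f₁ x| ≤ C := fun x => (hC₁ x).trans (le_max_left _ _)
  have hC₂' : ∀ x, |f₂ x| ≤ C := fun x => (hC₂ x).trans (le_max_right _ _)
  have h0C : (0:ℝ) ≤ C := (abs_nonneg _).trans (hC₁' 0)
  -- a cutoff function equal to 1 on both supports
  have hK : IsCompact (tsupport f₁ ∪ tsupport f₂) := hcs₁.union hcs₂
  obtain ⟨R, hR0, hRsub⟩ := hK.isBounded.subset_closedBall_lt 0 0
  let φ : ContDiffBump (0 : EuclideanSpace ℝ (Fin d)) := ⟨R, R + 1, hR0, by linarith⟩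
  have hχeq : ∀ x ∈ tsupport f₁ ∪ tsupport f₂, φ x = 1 := fun x hx =>
    φ.one_of_mem_closedBall (hRsub hx)
  -- approximating sequences
  obtain ⟨g₁, hg₁c, hg₁cs, hg₁b, hg₁z, htm₁⟩ :=
    approx_seq f₁ hm₁ C hC₁' hcs₁ φ φ.continuous φ.hasCompactSupport
      (fun x => φ.nonneg) (fun x => φ.le_one)
      (fun x hx => hχeq x (Or.inl hx))
  obtain ⟨g₂, hg₂c, hg₂cs, hg₂b, hg₂z, htm₂⟩ :=
    approx_seq f₂ hm₂ C hC₂' hcs₂ φ φ.continuous φ.hasCompactSupport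
      (fun x => φ.nonneg) (fun x => φ.le_one)
      (fun x hx => hχeq x (Or.inr hx))
  -- extract a.e. convergent subsequences
  obtain ⟨ns, hns_mono, hns_ae⟩ := htm₁.exists_seq_tendsto_ae
  have htm₂' : TendstoInMeasure volume (fun i => g₂ (ns i)) atTop f₂ :=
    fun ε hε => (htm₂ ε hε).comp hns_mono.tendsto_atTop
  obtain ⟨ms, hms_mono, hms_ae⟩ := htm₂'.exists_seq_tendsto_ae
  set G₁ : ℕ → EuclideanSpace ℝ (Fin d) → ℝ := fun i => g₁ (ns (ms i)) with hG₁def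
  set G₂ : ℕ → EuclideanSpace ℝ (Fin d) → ℝ := fun i => g₂ (ns (ms i)) with hG₂def
  have h₁ae : ∀ᵐ x, Tendsto (fun i => G₁ i x) atTop (𝓝 (f₁ x)) :=
    hns_ae.mono fun x hx => hx.comp hms_mono.tendsto_atTop
  have h₂ae : ∀ᵐ x, Tendsto (fun i => G₂ i x) atTop (𝓝 (f₂ x)) := hms_ae
  -- the uniform bound for dominated convergence
  set K' : Set (EuclideanSpace ℝ (Fin d)) := tsupport φ with hK'def
  have hK'c : IsCompact K' := φ.hasCompactSupport
  have hSc : IsCompact (K' ×ˢ Icc (-C) C) := hK'c.prod isCompact_Icc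
  obtain ⟨M, hM⟩ := hSc.exists_bound_of_continuousOn hF_cont.continuousOn
  have hM' : ∀ x ∈ K', ∀ t : ℝ, |t| ≤ C → |F x t| ≤ M := by
    intro x hx t ht
    simpa [Real.norm_eq_abs] using hM (x, t) ⟨hx, abs_le.1 ht⟩
  set bound : EuclideanSpace ℝ (Fin d) → ℝ := K'.indicator fun _ => 2 * M * (2 * C)
    with hbound_def
  have hbound_int : Integrable bound volume := by
    rw [hbound_def, integrable_indicator_iff (isClosed_tsupport _).measurableSet]
    exact integrableOn_const hK'c.measure_lt_top.ne
  set Φ : ℕ → EuclideanSpace ℝ (Fin d) → ℝ :=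
    fun i x => (F x (G₁ i x) - F x (G₂ i x)) * (G₁ i x - G₂ i x) with hΦdef
  have hΦc : ∀ i, Continuous (Φ i) := by
    intro i
    have h1 : Continuous fun x => F x (G₁ i x) :=
      hF_cont.comp (continuous_id.prodMk (hg₁c _))
    have h2 : Continuous fun x => F x (G₂ i x) :=
      hF_cont.comp (continuous_id.prodMk (hg₂c _))
    exact (h1.sub h2).mul ((hg₁c _).sub (hg₂c _))
  have h_bound : ∀ i, ∀ᵐ x, ‖Φ i x‖ ≤ bound x := by
    intro i
    refine Eventually.of_forall fun x => ?_
    by_cases hx : x ∈ K'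
    · have hb1 : |G₁ i x| ≤ C := hg₁b _ x
      have hb2 : |G₂ i x| ≤ C := hg₂b _ x
      have hF1 : |F x (G₁ i x)| ≤ M := hM' x hx _ hb1
      have hF2 : |F x (G₂ i x)| ≤ M := hM' x hx _ hb2
      rw [hbound_def, Set.indicator_of_mem hx, hΦdef]
      rw [Real.norm_eq_abs, abs_mul]
      have hA : |F x (G₁ i x) - F x (G₂ i x)| ≤ 2 * M := by
        calc |F x (G₁ i x) - F x (G₂ i x)| ≤ |F x (G₁ i x)| + |F x (G₂ i x)| :=
              abs_sub _ _
          _ ≤ 2 * M := by linarith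
      have hB : |G₁ i x - G₂ i x| ≤ 2 * C := by
        calc |G₁ i x - G₂ i x| ≤ |G₁ i x| + |G₂ i x| := abs_sub _ _
          _ ≤ 2 * C := by linarith
      exact mul_le_mul hA hB (abs_nonneg _) (by linarith [abs_nonneg (F x (G₁ i x))])
    · have h1 : G₁ i x = 0 := hg₁z _ x hx
      have h2 : G₂ i x = 0 := hg₂z _ x hx
      rw [hbound_def, Set.indicator_of_notMem hx, hΦdef]
      simp [h1, h2]
  have h_lim : ∀ᵐ x, Tendsto (fun i => Φ i x) atTop
      (𝓝 ((F x (f₁ x) - F x (f₂ x)) * (f₁ x - f₂ x))) := by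
    filter_upwards [h₁ae, h₂ae] with x hx1 hx2
    have t1 : Tendsto (fun i => F x (G₁ i x)) atTop (𝓝 (F x (f₁ x))) :=
      (hF_cont.tendsto (x, f₁ x)).comp (tendsto_const_nhds.prodMk_nhds hx1)
    have t2 : Tendsto (fun i => F x (G₂ i x)) atTop (𝓝 (F x (f₂ x))) :=
      (hF_cont.tendsto (x, f₂ x)).comp (tendsto_const_nhds.prodMk_nhds hx2)
    exact (t1.sub t2).mul (hx1.sub hx2)
  have hT : Tendsto (fun i => ∫ x, Φ i x) atTop
      (𝓝 (∫ x, (F x (f₁ x) - F x (f₂ x)) * (f₁ x - f₂ x))) :=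
    tendsto_integral_of_dominated_convergence bound
      (fun i => (hΦc i).aestronglyMeasurable) hbound_int h_bound h_lim
  refine ge_of_tendsto' hT fun i => ?_
  exact hmono (G₁ i) (G₂ i) (hg₁c _) (hg₂c _) (hg₁cs _) (hg₂cs _)
end

section
/- Let d ≥ 1 and let H : ℝ^d × ℝ^d → ℝ be continuous. Suppose v₁, v₂ : ℝ^d → ℝ are C² and ℤ^d-periodic, and λ₁, λ₂ ∈ ℝ satisfy −Δv_i(y) + H(Dv_i(y), y) = λ_i for all y ∈ ℝ^d and i = 1, 2. Then λ₁ = λ₂. -/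
open MeasureTheory

/-- The Laplacian of a function on `ℝ^d`, written in coordinates. -/
noncomputable def lap {d : ℕ} (f : EuclideanSpace ℝ (Fin d) → ℝ)
    (x : EuclideanSpace ℝ (Fin d)) : ℝ :=
  ∑ i : Fin d, fderiv ℝ (fun y => fderiv ℝ f y (EuclideanSpace.single i 1)) x
    (EuclideanSpace.single i 1)

/-- One-dimensional second derivative test at a global maximum at `0`. -/
lemma aux_secondDeriv_nonpos {g h : ℝ → ℝ} {c : ℝ}
    (hg : ∀ t, HasDerivAt g (h t) t) (hh : HasDerivAt h c 0)
    (hmax : ∀ t, g t ≤ g 0) : c ≤ 0 := by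
  by_contra hc
  push_neg at hc
  have hlm : IsLocalMax g 0 := Filter.Eventually.of_forall hmax
  have h0 : h 0 = 0 := hlm.hasDerivAt_eq_zero (hg 0)
  have hslope : Filter.Tendsto (slope h 0) (nhdsWithin 0 {(0:ℝ)}ᶜ) (nhds c) :=
    hasDerivAt_iff_tendsto_slope.mp hh
  have hev : ∀ᶠ t in nhdsWithin 0 {(0:ℝ)}ᶜ, 0 < slope h 0 t :=
    hslope.eventually (eventually_gt_nhds hc)
  obtain ⟨ε, hε, hball⟩ := Metric.mem_nhdsWithin_iff.mp hev
  set t₀ : ℝ := ε / 2 with ht₀def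
  have ht₀ : 0 < t₀ := by positivity
  have hdg : Differentiable ℝ g := fun t => (hg t).differentiableAt
  have hmono : StrictMonoOn g (Set.Icc 0 t₀) := by
    apply strictMonoOn_of_deriv_pos (convex_Icc 0 t₀) hdg.continuous.continuousOn
    intro t ht
    rw [interior_Icc] at ht
    have htpos : 0 < t := ht.1
    have htε : t ∈ Metric.ball (0:ℝ) ε ∩ {(0:ℝ)}ᶜ := by
      constructor
      · simp only [Metric.mem_ball, Real.dist_eq, sub_zero]
        rw [abs_of_pos htpos]
        linarith [ht.2]
      · exact fun h' => htpos.ne' h'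
    have hsl : 0 < slope h 0 t := hball htε
    rw [slope_def_field, h0, sub_zero, sub_zero] at hsl
    rw [(hg t).deriv]
    exact (div_pos_iff.mp hsl).resolve_right (fun ⟨_, h2⟩ => absurd htpos (not_lt.mpr h2.le)) |>.1
  have : g 0 < g t₀ := hmono (Set.left_mem_Icc.mpr ht₀.le) (Set.right_mem_Icc.mpr ht₀.le) ht₀
  exact absurd (hmax t₀) (not_le.mpr this)

/-- At a global maximum, every second directional derivative is nonpositive. -/
lemma aux_dir {d : ℕ} {f : EuclideanSpace ℝ (Fin d) → ℝ} (hf : ContDiff ℝ 2 f)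
    (a : EuclideanSpace ℝ (Fin d)) (e : EuclideanSpace ℝ (Fin d))
    (hmax : ∀ y, f y ≤ f a) :
    fderiv ℝ (fun y => fderiv ℝ f y e) a e ≤ 0 := by
  have hdf : Differentiable ℝ f := hf.differentiable two_ne_zero
  have hF : ContDiff ℝ 1 (fun y => fderiv ℝ f y e) :=
    (hf.fderiv_right (by norm_num)).clm_apply contDiff_const
  have hdF : Differentiable ℝ (fun y => fderiv ℝ f y e) := hF.differentiable one_ne_zero
  set L : ℝ → EuclideanSpace ℝ (Fin d) := fun t => a + t • e with hLdef
  have hL : ∀ t, HasDerivAt L e t := by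
    intro t
    have : HasDerivAt (fun s : ℝ => s • e) ((1:ℝ) • e) t := (hasDerivAt_id t).smul_const e
    simpa [hLdef] using this.const_add a
  have hg : ∀ t, HasDerivAt (fun s => f (L s)) (fderiv ℝ f (L t) e) t := fun t =>
    (hdf (L t)).hasFDerivAt.comp_hasDerivAt t (hL t)
  have hL0 : L 0 = a := by simp [hLdef]
  have hh : HasDerivAt (fun t => fderiv ℝ f (L t) e)
      (fderiv ℝ (fun y => fderiv ℝ f y e) a e) 0 := by
    have := ((hdF (L 0)).hasFDerivAt.comp_hasDerivAt 0 (hL 0))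
    rw [hL0] at this
    exact this
  have hmax' : ∀ t, f (L t) ≤ f (L 0) := fun t => by rw [hL0]; exact hmax _
  exact aux_secondDeriv_nonpos hg hh hmax'

/-- A continuous `ℤ^d`-periodic function attains a global maximum. -/
lemma aux_max {d : ℕ} {f : EuclideanSpace ℝ (Fin d) → ℝ} (hf : Continuous f)
    (hper : ∀ (y : EuclideanSpace ℝ (Fin d)) (k : Fin d → ℤ),
      f (y + (WithLp.equiv 2 (Fin d → ℝ)).symm (fun i => (k i : ℝ))) = f y) :
    ∃ a, ∀ y, f y ≤ f a := by
  set e := WithLp.equiv 2 (Fin d → ℝ) with hedef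
  have hcont : Continuous fun x : Fin d → ℝ => f (e.symm x) :=
    hf.comp (PiLp.continuous_toLp 2 fun _ : Fin d => ℝ)
  obtain ⟨x₀, -, hx₀⟩ := (isCompact_Icc (a := (0 : Fin d → ℝ)) (b := 1)).exists_isMaxOn
      ⟨0, Set.mem_Icc.mpr ⟨le_rfl, fun i => zero_le_one⟩⟩ hcont.continuousOn
  refine ⟨e.symm x₀, fun y => ?_⟩
  set x' : Fin d → ℝ := fun i => Int.fract (e y i) with hx'def
  have hx' : x' ∈ Set.Icc (0:Fin d → ℝ) 1 :=
    ⟨fun i => Int.fract_nonneg _, fun i => (Int.fract_lt_one _).le⟩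
  have key : f y = f (e.symm x') := by
    have h2 := hper (e.symm x') (fun i => ⌊e y i⌋)
    rw [← h2]
    congr 1
    apply e.injective
    rw [show ∀ u v : EuclideanSpace ℝ (Fin d), e (u + v) = e u + e v from fun _ _ => rfl, Equiv.apply_symm_apply, Equiv.apply_symm_apply]
    funext i
    show e y i = x' i + (⌊e y i⌋ : ℝ)
    rw [hx'def]
    exact (Int.fract_add_floor _).symm
  rw [key]
  exact hx₀ hx'

/-- The one-sided comparison of ergodic constants. -/
lemma aux_key {d : ℕ}
    (H : EuclideanSpace ℝ (Fin d) → EuclideanSpace ℝ (Fin d) → ℝ)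
    (v₁ v₂ : EuclideanSpace ℝ (Fin d) → ℝ) (lam₁ lam₂ : ℝ)
    (hv₁ : ContDiff ℝ 2 v₁) (hv₂ : ContDiff ℝ 2 v₂)
    (hv₁_per : ∀ (y : EuclideanSpace ℝ (Fin d)) (k : Fin d → ℤ),
      v₁ (y + (WithLp.equiv 2 (Fin d → ℝ)).symm (fun i => (k i : ℝ))) = v₁ y)
    (hv₂_per : ∀ (y : EuclideanSpace ℝ (Fin d)) (k : Fin d → ℤ),
      v₂ (y + (WithLp.equiv 2 (Fin d → ℝ)).symm (fun i => (k i : ℝ))) = v₂ y)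
    (heq₁ : ∀ y, -lap v₁ y + H (gradient v₁ y) y = lam₁)
    (heq₂ : ∀ y, -lap v₂ y + H (gradient v₂ y) y = lam₂) :
    lam₂ ≤ lam₁ := by
  set w : EuclideanSpace ℝ (Fin d) → ℝ := fun y => v₁ y - v₂ y with hwdef
  have hw : ContDiff ℝ 2 w := hv₁.sub hv₂
  have hwper : ∀ (y : EuclideanSpace ℝ (Fin d)) (k : Fin d → ℤ),
      w (y + (WithLp.equiv 2 (Fin d → ℝ)).symm (fun i => (k i : ℝ))) = w y := by
    intro y k
    simp only [hwdef, hv₁_per y k, hv₂_per y k]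
  obtain ⟨a, ha⟩ := aux_max hw.continuous hwper
  have hd₁ : Differentiable ℝ v₁ := hv₁.differentiable two_ne_zero
  have hd₂ : Differentiable ℝ v₂ := hv₂.differentiable two_ne_zero
  have hlm : IsLocalMax w a := Filter.Eventually.of_forall ha
  have hfd : fderiv ℝ w a = 0 := hlm.fderiv_eq_zero
  have hfd' : fderiv ℝ w a = fderiv ℝ v₁ a - fderiv ℝ v₂ a := fderiv_sub (hd₁ a) (hd₂ a)
  have hfdeq : fderiv ℝ v₁ a = fderiv ℝ v₂ a := sub_eq_zero.mp (hfd'.symm.trans hfd)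
  have hgrad : gradient v₁ a = gradient v₂ a := by
    unfold gradient
    rw [hfdeq]
  have hsum : ∀ i : Fin d,
      fderiv ℝ (fun y => fderiv ℝ v₁ y (EuclideanSpace.single i 1)) a (EuclideanSpace.single i 1)
      - fderiv ℝ (fun y => fderiv ℝ v₂ y (EuclideanSpace.single i 1)) a
          (EuclideanSpace.single i 1) ≤ 0 := by
    intro i
    set e : EuclideanSpace ℝ (Fin d) := EuclideanSpace.single i (1:ℝ) with hedef
    have h1 : ContDiff ℝ 1 (fun y => fderiv ℝ v₁ y e) :=
      (hv₁.fderiv_right (by norm_num)).clm_apply contDiff_const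
    have h2 : ContDiff ℝ 1 (fun y => fderiv ℝ v₂ y e) :=
      (hv₂.fderiv_right (by norm_num)).clm_apply contDiff_const
    have hfw : (fun y => fderiv ℝ w y e) =
        fun y => fderiv ℝ v₁ y e - fderiv ℝ v₂ y e := by
      funext y
      rw [hwdef]
      rw [fderiv_fun_sub (hd₁ y) (hd₂ y)]
      rfl
    have hdir := aux_dir hw a e ha
    rw [hfw, fderiv_fun_sub (h1.differentiable one_ne_zero a) (h2.differentiable one_ne_zero a)] at hdir
    simpa using hdir
  have hlap : lap v₁ a - lap v₂ a ≤ 0 := by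
    rw [lap, lap, ← Finset.sum_sub_distrib]
    exact Finset.sum_nonpos fun i _ => hsum i
  have e₁ := heq₁ a
  have e₂ := heq₂ a
  rw [hgrad] at e₁
  linarith

/-- uniqueness of the ergodic constant in the cell problem
`−Δv + H(Dv, y) = λ` with `ℤ^d`-periodic `v`. -/
theorem stmt13 (d : ℕ) (hd : 1 ≤ d)
    (H : EuclideanSpace ℝ (Fin d) → EuclideanSpace ℝ (Fin d) → ℝ)
    (hH : Continuous fun p : EuclideanSpace ℝ (Fin d) × EuclideanSpace ℝ (Fin d) =>
      H p.1 p.2)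
    (v₁ v₂ : EuclideanSpace ℝ (Fin d) → ℝ) (lam₁ lam₂ : ℝ)
    (hv₁ : ContDiff ℝ 2 v₁) (hv₂ : ContDiff ℝ 2 v₂)
    (hv₁_per : ∀ (y : EuclideanSpace ℝ (Fin d)) (k : Fin d → ℤ),
      v₁ (y + (WithLp.equiv 2 (Fin d → ℝ)).symm (fun i => (k i : ℝ))) = v₁ y)
    (hv₂_per : ∀ (y : EuclideanSpace ℝ (Fin d)) (k : Fin d → ℤ),
      v₂ (y + (WithLp.equiv 2 (Fin d → ℝ)).symm (fun i => (k i : ℝ))) = v₂ y)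
    (heq₁ : ∀ y, -lap v₁ y + H (gradient v₁ y) y = lam₁)
    (heq₂ : ∀ y, -lap v₂ y + H (gradient v₂ y) y = lam₂) :
    lam₁ = lam₂ := by
  exact le_antisymm
    (aux_key H v₂ v₁ lam₂ lam₁ hv₂ hv₁ hv₂_per hv₁_per heq₂ heq₁)
    (aux_key H v₁ v₂ lam₁ lam₂ hv₁ hv₂ hv₁_per hv₂_per heq₁ heq₂)
end

section
/- Let d ≥ 1 and let H : ℝ^d × ℝ^d → ℝ be continuous and such that p ↦ H(p, y) is convex for every y ∈ ℝ^d. Let p₁, p₂ ∈ ℝ^d and set p = (p₁ + p₂)/2. Suppose v₁, v₂, v : ℝ^d → ℝ are C² and ℤ^d-periodic and λ₁, λ₂, λ ∈ ℝ satisfy −Δv_i(y) + H(p_i + Dv_i(y), y) = λ_i for all y (i = 1, 2) and −Δv(y) + H(p + Dv(y), y) = λ for all y. Then λ ≤ (λ₁ + λ₂)/2. -/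
open MeasureTheory

/-- One-dimensional second derivative test at a global minimum. -/
lemma aux_1d (g : ℝ → ℝ) (hg : ContDiff ℝ 2 g) (hmin : ∀ t, g 0 ≤ g t) :
    0 ≤ deriv (deriv g) 0 := by
  by_contra h
  push_neg at h
  have hloc : IsLocalMin g 0 := Filter.Eventually.of_forall hmin
  have hd0 : deriv g 0 = 0 := hloc.deriv_eq_zero
  have hdg : ContDiff ℝ 1 (deriv g) := by
    have h2 : ContDiff ℝ ((1 : WithTop ℕ∞) + 1) g := by
      rw [show ((1 : WithTop ℕ∞) + 1) = 2 from rfl]; exact hg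
    exact (contDiff_succ_iff_deriv.mp h2).2.2
  have hdd : HasDerivAt (deriv g) (deriv (deriv g) 0) 0 :=
    ((hdg.differentiable one_ne_zero) 0).hasDerivAt
  have hslope := hasDerivAt_iff_tendsto_slope.mp hdd
  have hlt : ∀ᶠ t in nhdsWithin (0:ℝ) {(0:ℝ)}ᶜ,
      slope (deriv g) 0 t < deriv (deriv g) 0 / 2 :=
    hslope.eventually_lt_const (by linarith)
  have hmono : nhdsWithin (0:ℝ) (Set.Ioi 0) ≤ nhdsWithin (0:ℝ) {(0:ℝ)}ᶜ :=
    nhdsWithin_mono 0 (fun t ht => ne_of_gt ht)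
  have hlt' : ∀ᶠ t in nhdsWithin (0:ℝ) (Set.Ioi 0),
      slope (deriv g) 0 t < deriv (deriv g) 0 / 2 := hlt.filter_mono hmono
  rw [eventually_nhdsWithin_iff] at hlt'
  obtain ⟨ε, hε, hball⟩ := Metric.eventually_nhds_iff.mp hlt'
  have hderivneg : ∀ t ∈ Set.Ioo (0:ℝ) (ε/2), deriv g t < 0 := by
    intro t ht
    have hdist : dist t 0 < ε := by
      rw [Real.dist_eq, sub_zero, abs_of_pos ht.1]; linarith [ht.2]
    have h1 := hball hdist ht.1
    rw [slope_def_field, hd0, sub_zero, sub_zero] at h1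
    have h2 : deriv g t < deriv (deriv g) 0 / 2 * t := (div_lt_iff₀ ht.1).mp h1
    nlinarith [ht.1]
  have hanti : StrictAntiOn g (Set.Icc 0 (ε/2)) := by
    apply strictAntiOn_of_deriv_neg (convex_Icc _ _) (hg.continuous.continuousOn)
    rw [interior_Icc]; exact hderivneg
  have hlt2 : g (ε/2) < g 0 :=
    hanti (Set.left_mem_Icc.2 (by linarith)) (Set.right_mem_Icc.2 (by linarith))
      (by linarith)
  exact absurd (hmin (ε/2)) (not_le.2 hlt2)

/-- Second directional derivative test at a global minimum. -/
lemma aux_dir_s14 {E : Type*} [NormedAddCommGroup E] [NormedSpace ℝ E]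
    (f : E → ℝ) (hf : ContDiff ℝ 2 f) (x₀ u : E) (hmin : ∀ x, f x₀ ≤ f x) :
    0 ≤ fderiv ℝ (fun y => fderiv ℝ f y u) x₀ u := by
  have hline : ContDiff ℝ 2 (fun t : ℝ => x₀ + t • u) :=
    contDiff_const.add (contDiff_id.smul contDiff_const)
  have hg : ContDiff ℝ 2 (fun t : ℝ => f (x₀ + t • u)) := hf.comp hline
  have hgmin : ∀ t : ℝ, f (x₀ + (0:ℝ) • u) ≤ f (x₀ + t • u) := fun t => by
    simpa using hmin (x₀ + t • u)
  have h := aux_1d (fun t : ℝ => f (x₀ + t • u)) hg (by simpa using hgmin)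
  have hL : ∀ t : ℝ, HasDerivAt (fun s : ℝ => x₀ + s • u) u t := fun t => by
    simpa using ((hasDerivAt_id t).smul_const u).const_add x₀
  have hg' : ∀ t : ℝ, HasDerivAt (fun t : ℝ => f (x₀ + t • u))
      (fderiv ℝ f (x₀ + t • u) u) t := fun t =>
    ((hf.differentiable two_ne_zero (x₀ + t • u)).hasFDerivAt).comp_hasDerivAt t (hL t)
  have hdg : deriv (fun t : ℝ => f (x₀ + t • u))
      = fun t => fderiv ℝ f (x₀ + t • u) u := funext fun t => (hg' t).deriv
  have hF2 : ContDiff ℝ 1 (fun y => fderiv ℝ f y u) :=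
    (hf.fderiv_right (by norm_num)).clm_apply contDiff_const
  have hg'' : HasDerivAt (deriv (fun t : ℝ => f (x₀ + t • u)))
      (fderiv ℝ (fun y => fderiv ℝ f y u) x₀ u) 0 := by
    rw [hdg]
    have := ((hF2.differentiable one_ne_zero (x₀ + (0:ℝ) • u)).hasFDerivAt).comp_hasDerivAt
      (0:ℝ) (hL 0)
    simpa [Function.comp_def] using this
  rw [← hg''.deriv]
  exact h

/-- midpoint convexity of the effective Hamiltonian defined through the
cell problem `−Δv + H(p + Dv, y) = H̄(p)` on the torus. -/
theorem stmt14 (d : ℕ) (hd : 1 ≤ d)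
    (H : EuclideanSpace ℝ (Fin d) → EuclideanSpace ℝ (Fin d) → ℝ)
    (hH_cont : Continuous fun p : EuclideanSpace ℝ (Fin d) × EuclideanSpace ℝ (Fin d) =>
      H p.1 p.2)
    (hH_conv : ∀ y : EuclideanSpace ℝ (Fin d), ConvexOn ℝ Set.univ fun p => H p y)
    (p₁ p₂ : EuclideanSpace ℝ (Fin d))
    (v₁ v₂ v : EuclideanSpace ℝ (Fin d) → ℝ) (lam₁ lam₂ lam : ℝ)
    (hv₁ : ContDiff ℝ 2 v₁) (hv₂ : ContDiff ℝ 2 v₂) (hv : ContDiff ℝ 2 v)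
    (hv₁_per : ∀ (y : EuclideanSpace ℝ (Fin d)) (k : Fin d → ℤ),
      v₁ (y + (WithLp.equiv 2 (Fin d → ℝ)).symm (fun i => (k i : ℝ))) = v₁ y)
    (hv₂_per : ∀ (y : EuclideanSpace ℝ (Fin d)) (k : Fin d → ℤ),
      v₂ (y + (WithLp.equiv 2 (Fin d → ℝ)).symm (fun i => (k i : ℝ))) = v₂ y)
    (hv_per : ∀ (y : EuclideanSpace ℝ (Fin d)) (k : Fin d → ℤ),
      v (y + (WithLp.equiv 2 (Fin d → ℝ)).symm (fun i => (k i : ℝ))) = v y)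
    (heq₁ : ∀ y, -lap v₁ y + H (p₁ + gradient v₁ y) y = lam₁)
    (heq₂ : ∀ y, -lap v₂ y + H (p₂ + gradient v₂ y) y = lam₂)
    (heq : ∀ y, -lap v y + H ((2 : ℝ)⁻¹ • (p₁ + p₂) + gradient v y) y = lam) :
    lam ≤ (lam₁ + lam₂) / 2 := by
  set w : EuclideanSpace ℝ (Fin d) → ℝ := fun y => v y - (2:ℝ)⁻¹ * (v₁ y + v₂ y) with hw_def
  have hw : ContDiff ℝ 2 w := by
    rw [hw_def]
    exact hv.sub (contDiff_const.mul (hv₁.add hv₂))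
  -- existence of a global minimum of w via periodicity
  set K : Set (EuclideanSpace ℝ (Fin d)) := (EuclideanSpace.equiv (Fin d) ℝ).symm '' Set.Icc 0 1 with hK_def
  have hKc : IsCompact K :=
    isCompact_Icc.image (EuclideanSpace.equiv (Fin d) ℝ).symm.continuous
  have hKne : K.Nonempty :=
    ⟨_, Set.mem_image_of_mem _ (Set.left_mem_Icc.2 zero_le_one)⟩
  obtain ⟨y₀, hy₀K, hy₀⟩ := hKc.exists_isMinOn hKne hw.continuous.continuousOn
  have hmin : ∀ y, w y₀ ≤ w y := by
    intro y
    set k : Fin d → ℤ := fun i => -⌊y i⌋ with hk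
    have hfr : (fun i => Int.fract (y i)) ∈ Set.Icc (0 : Fin d → ℝ) 1 := by
      constructor
      · intro i; exact Int.fract_nonneg _
      · intro i; exact (Int.fract_lt_one _).le
    have hkey : (EuclideanSpace.equiv (Fin d) ℝ).symm (fun i => Int.fract (y i))
        = y + (WithLp.equiv 2 (Fin d → ℝ)).symm (fun i => ((k i : ℤ) : ℝ)) := by
      ext i
      simp [Int.fract, hk, sub_eq_add_neg, PiLp.add_apply, WithLp.equiv_symm_apply, EuclideanSpace.equiv]
    have hmem : y + (WithLp.equiv 2 (Fin d → ℝ)).symm (fun i => ((k i : ℤ) : ℝ)) ∈ K := by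
      rw [← hkey]
      exact Set.mem_image_of_mem _ hfr
    have h1 : w y₀ ≤ w (y + (WithLp.equiv 2 (Fin d → ℝ)).symm (fun i => ((k i : ℤ) : ℝ))) :=
      hy₀ hmem
    have h2 : w (y + (WithLp.equiv 2 (Fin d → ℝ)).symm (fun i => ((k i : ℤ) : ℝ))) = w y := by
      simp only [hw_def, hv_per y k, hv₁_per y k, hv₂_per y k]
    rwa [h2] at h1
  have hloc : IsLocalMin w y₀ := Filter.Eventually.of_forall hmin
  have hG : fderiv ℝ w y₀ = 0 := hloc.fderiv_eq_zero
  -- first-order identity: gradient v y₀ = (grad v₁ + grad v₂)/2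
  have hd1 : Differentiable ℝ v₁ := hv₁.differentiable (by norm_num)
  have hd2 : Differentiable ℝ v₂ := hv₂.differentiable (by norm_num)
  have hdv : Differentiable ℝ v := hv.differentiable (by norm_num)
  have hfd : fderiv ℝ v y₀ = (2:ℝ)⁻¹ • (fderiv ℝ v₁ y₀ + fderiv ℝ v₂ y₀) := by
    have hd12 : DifferentiableAt ℝ (fun z => v₁ z + v₂ z) y₀ := (hd1 y₀).add (hd2 y₀)
    have h3 : fderiv ℝ w y₀ = fderiv ℝ v y₀ - (2:ℝ)⁻¹ • (fderiv ℝ v₁ y₀ + fderiv ℝ v₂ y₀) := by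
      rw [hw_def]
      rw [fderiv_fun_sub (hdv y₀) (hd12.const_mul _), fderiv_const_mul hd12,
        fderiv_fun_add (hd1 y₀) (hd2 y₀)]
    rw [hG] at h3
    exact sub_eq_zero.mp h3.symm
  have hgrad : gradient v y₀ = (2:ℝ)⁻¹ • (gradient v₁ y₀ + gradient v₂ y₀) := by
    unfold gradient
    rw [hfd, _root_.map_smul, _root_.map_add]
  -- second-order linearity and sign
  have hDf : ∀ (f : EuclideanSpace ℝ (Fin d) → ℝ), ContDiff ℝ 2 f → ∀ u : EuclideanSpace ℝ (Fin d),
      Differentiable ℝ (fun y => fderiv ℝ f y u) := fun f hf u =>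
    ((hf.fderiv_right (m := 1) (by norm_num)).clm_apply contDiff_const).differentiable one_ne_zero
  have key : ∀ u : EuclideanSpace ℝ (Fin d), fderiv ℝ (fun y => fderiv ℝ w y u) y₀ u
      = fderiv ℝ (fun y => fderiv ℝ v y u) y₀ u
        - (2:ℝ)⁻¹ * (fderiv ℝ (fun y => fderiv ℝ v₁ y u) y₀ u
          + fderiv ℝ (fun y => fderiv ℝ v₂ y u) y₀ u) := by
    intro u
    have h1 : (fun y => fderiv ℝ w y u)
        = fun y => fderiv ℝ v y u - (2:ℝ)⁻¹ * (fderiv ℝ v₁ y u + fderiv ℝ v₂ y u) := by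
      funext y
      have hd12 : DifferentiableAt ℝ (fun z => v₁ z + v₂ z) y := (hd1 y).add (hd2 y)
      show fderiv ℝ (fun z => v z - (2:ℝ)⁻¹ * (v₁ z + v₂ z)) y u = _
      rw [fderiv_fun_sub (hdv y) (hd12.const_mul _), fderiv_const_mul hd12,
        fderiv_fun_add (hd1 y) (hd2 y)]
      simp
      ring
    rw [h1]
    have hA := hDf v hv u
    have hB := hDf v₁ hv₁ u
    have hC := hDf v₂ hv₂ u
    have hBC : DifferentiableAt ℝ (fun y => fderiv ℝ v₁ y u + fderiv ℝ v₂ y u) y₀ :=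
      (hB y₀).add (hC y₀)
    rw [fderiv_fun_sub (hA y₀) (hBC.const_mul _), fderiv_const_mul hBC,
      fderiv_fun_add (hB y₀) (hC y₀)]
    simp
    ring
  have hlapw : 0 ≤ lap w y₀ := by
    unfold lap
    apply Finset.sum_nonneg
    intro i _
    exact aux_dir_s14 w hw y₀ _ hmin
  have hlap_lin : lap w y₀ = lap v y₀ - (2:ℝ)⁻¹ * (lap v₁ y₀ + lap v₂ y₀) := by
    unfold lap
    rw [← Finset.sum_add_distrib, Finset.mul_sum, ← Finset.sum_sub_distrib]
    apply Finset.sum_congr rfl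
    intro i _
    rw [key (EuclideanSpace.single i 1)]
  -- convexity
  have hconv := (hH_conv y₀).2 (Set.mem_univ (p₁ + gradient v₁ y₀))
    (Set.mem_univ (p₂ + gradient v₂ y₀)) (by norm_num : (0:ℝ) ≤ 2⁻¹)
    (by norm_num : (0:ℝ) ≤ 2⁻¹) (by norm_num : (2:ℝ)⁻¹ + 2⁻¹ = 1)
  have harg : (2:ℝ)⁻¹ • (p₁ + p₂) + gradient v y₀
      = (2:ℝ)⁻¹ • (p₁ + gradient v₁ y₀) + (2:ℝ)⁻¹ • (p₂ + gradient v₂ y₀) := by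
    rw [hgrad]; module
  have h₁ := heq₁ y₀
  have h₂ := heq₂ y₀
  have h₀ := heq y₀
  rw [harg] at h₀
  have hHle : H ((2:ℝ)⁻¹ • (p₁ + gradient v₁ y₀) + (2:ℝ)⁻¹ • (p₂ + gradient v₂ y₀)) y₀
      ≤ (2:ℝ)⁻¹ * H (p₁ + gradient v₁ y₀) y₀ + (2:ℝ)⁻¹ * H (p₂ + gradient v₂ y₀) y₀ := by
    simpa using hconv
  have hlapin : (2:ℝ)⁻¹ * (lap v₁ y₀ + lap v₂ y₀) ≤ lap v y₀ := by linarith [hlapw, hlap_lin]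
  linarith [hHle, hlapin, h₁, h₂, h₀]
end
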